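/- Failure of sequentialization for the Danos–Regnier switching: for any dual pair (C, C*) of n-ary generalized connectives with C ≠ ⊗^n and C ≠ ⅋^n (i.e., P_C is neither the set of all singletons nor the one-class partition), the proof-structure S with exactly two terminal nodes C(A₁,…,Aₙ) and C*(~A₁,…,~Aₙ) (A_i atoms, joined by atomic axiom links) is correct in the sense of the Danos–Regnier switching but is not sequentializable; hence there exists a Danos–Regnier-correct proof-structure that is not sequentializable. -/

import Mathlib

/-! ## Partitions of `{1,…,n}`, meeting graphs, orthogonality (Danos–Regnier) -/

/-- A partition of `{1,…,n}`, represented as a `Finpartition` of `Fin n`. -/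
abbrev SetPartition (n : ℕ) := Finpartition (Finset.univ : Finset (Fin n))

/-- The (simple graph underlying the) meeting graph `G(p,q)` of two partitions of `{1,…,n}`:
its vertices are the classes of `p` together with the classes of `q`, and a class of `p` is
adjacent to a class of `q` iff some `i ∈ {1,…,n}` belongs to both (in the meeting multigraph
there is one edge for each such `i`). -/
def meetingGraph {n : ℕ} (p q : SetPartition n) :
    SimpleGraph ({c // c ∈ p.parts} ⊕ {d // d ∈ q.parts}) :=
  SimpleGraph.fromRel fun a b =>
    ∃ (c : {c // c ∈ p.parts}) (d : {d // d ∈ q.parts}),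
      ((c : Finset (Fin n)) ∩ (d : Finset (Fin n))).Nonempty ∧
      a = Sum.inl c ∧ b = Sum.inr d

/-- `p ⊥ q` : the meeting multigraph `G(p,q)` is connected and acyclic.  The meeting
multigraph has exactly `n` edges (one per element of `{1,…,n}`), and a connected multigraph
is acyclic iff its number of edges is exactly one less than its number of vertices; so
`G(p,q)` is connected and acyclic iff it is connected (equivalently, the underlying simple
graph is connected) and `n + 1 = (#classes of p) + (#classes of q)`. -/
def Finpartition.Orthogonal {n : ℕ} (p q : SetPartition n) : Prop :=
  (meetingGraph p q).Connected ∧ n + 1 = p.parts.card + q.parts.card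

/-- Orthogonality of two partition sets: `P ⊥ Q` iff `p ⊥ q` for all `p ∈ P`, `q ∈ Q`. -/
def orthSet {n : ℕ} (P Q : Set (SetPartition n)) : Prop :=
  ∀ p ∈ P, ∀ q ∈ Q, p.Orthogonal q

/-- `P^⊥`, the maximal partition set orthogonal to `P`. -/
def orthCompl {n : ℕ} (P : Set (SetPartition n)) : Set (SetPartition n) :=
  {q | ∀ p ∈ P, p.Orthogonal q}

/-- The partition set of `⊗ⁿ` : the single partition of `{1,…,n}` into singleton classes. -/
def IsTensorSet {n : ℕ} (R : Set (SetPartition n)) : Prop :=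
  R = {p : SetPartition n | ∀ c ∈ p.parts, c.card = 1}

/-- The partition set of `⅋ⁿ` : the single partition of `{1,…,n}` with one class. -/
def IsParSet {n : ℕ} (R : Set (SetPartition n)) : Prop :=
  R = {p : SetPartition n | p.parts = {Finset.univ}}

/-! ## Generalized multiplicative connectives and the sequent calculus `MLL(Cᵢ)` -/

/-- An `n`-ary generalized (multiplicative) connective `C` together with its dual `C*`:
a pair of nonempty finite partition sets of `{1,…,n}` with `(P_C)^⊥ = P_{C*}` and
`(P_{C*})^⊥ = P_C`.  `rules` is the partition set of the introduction (right) rules of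
`C`, and `dualRules` the one of its dual `C*`. -/
structure GenConn : Type where
  arity : ℕ
  rules : Set (SetPartition arity)
  dualRules : Set (SetPartition arity)
  rules_nonempty : rules.Nonempty
  rules_finite : rules.Finite
  dualRules_nonempty : dualRules.Nonempty
  dualRules_finite : dualRules.Finite
  orth : orthCompl rules = dualRules
  orth' : orthCompl dualRules = rules

/-- Formulas of `MLL(Cᵢ)`: built from atoms `P` and their duals `~P` by `⊗`, `⅋` and the
generalized connectives `Cᵢ` (with constructor `conn i`) and their duals `Cᵢ*` (with
constructor `dconn i`), where `i` ranges over a signature `I` and `Csig i` records the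
arity and the partition sets of `Cᵢ`. -/
inductive Formula (I : Type) (Csig : I → GenConn) : Type
  | pos : ℕ → Formula I Csig
  | neg : ℕ → Formula I Csig
  | tens : Formula I Csig → Formula I Csig → Formula I Csig
  | parr : Formula I Csig → Formula I Csig → Formula I Csig
  | conn : (i : I) → (Fin (Csig i).arity → Formula I Csig) → Formula I Csig
  | dconn : (i : I) → (Fin (Csig i).arity → Formula I Csig) → Formula I Csig

/-- The dual `~A` of a formula, extended by De Morgan and
`~(Cᵢ(A₁,…,Aₘ)) = Cᵢ*(~A₁,…,~Aₘ)`. -/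
def Formula.dual {I : Type} {Csig : I → GenConn} : Formula I Csig → Formula I Csig
  | .pos m => .neg m
  | .neg m => .pos m
  | .tens A B => .parr A.dual B.dual
  | .parr A B => .tens A.dual B.dual
  | .conn i A => .dconn i fun k => (A k).dual
  | .dconn i A => .conn i fun k => (A k).dual

/-- Provability in the one-sided sequent calculus `MLL(Cᵢ)` (sequents are multisets of
formulas).  The rules are the axiom `⊢ P, ~P` for atomic `P`, the cut rule (allowed only
when `cutEnabled = true`), the `⊗`- and `⅋`-rules of MLL, and, for each generalized
connective `Cᵢ` and each partition `p ∈ P_{Cᵢ}` with classes `c`, the introduction rule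
with premises `⊢ Γ_c, A_{c₁},…,A_{cₘ}` (one for each class `c` of `p`) and conclusion
`⊢ Γ₁,…,Γ_k, Cᵢ(A₁,…,Aₘ)`; dually for `Cᵢ*` using `p ∈ P_{Cᵢ*}`. -/
inductive Provable {I : Type} {Csig : I → GenConn} (cutEnabled : Bool) :
    Multiset (Formula I Csig) → Prop
  | ax (m : ℕ) : Provable cutEnabled {Formula.pos m, Formula.neg m}
  | cut (A : Formula I Csig) (Γ Δ : Multiset (Formula I Csig)) (hcut : cutEnabled = true) :
      Provable cutEnabled (A ::ₘ Γ) → Provable cutEnabled (A.dual ::ₘ Δ) →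
      Provable cutEnabled (Γ + Δ)
  | tens (A B : Formula I Csig) (Γ Δ : Multiset (Formula I Csig)) :
      Provable cutEnabled (A ::ₘ Γ) → Provable cutEnabled (B ::ₘ Δ) →
      Provable cutEnabled (Formula.tens A B ::ₘ (Γ + Δ))
  | parr (A B : Formula I Csig) (Γ : Multiset (Formula I Csig)) :
      Provable cutEnabled (A ::ₘ B ::ₘ Γ) →
      Provable cutEnabled (Formula.parr A B ::ₘ Γ)
  | conn (i : I) (A : Fin (Csig i).arity → Formula I Csig)
      (p : SetPartition (Csig i).arity) (hp : p ∈ (Csig i).rules)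
      (Γ : {c // c ∈ p.parts} → Multiset (Formula I Csig)) :
      (∀ c : {c // c ∈ p.parts},
        Provable cutEnabled (Γ c + Multiset.map A (c : Finset (Fin (Csig i).arity)).val)) →
      Provable cutEnabled (Formula.conn i A ::ₘ ∑ c : {c // c ∈ p.parts}, Γ c)
  | dconn (i : I) (A : Fin (Csig i).arity → Formula I Csig)
      (p : SetPartition (Csig i).arity) (hp : p ∈ (Csig i).dualRules)
      (Γ : {c // c ∈ p.parts} → Multiset (Formula I Csig)) :
      (∀ c : {c // c ∈ p.parts},
        Provable cutEnabled (Γ c + Multiset.map A (c : Finset (Fin (Csig i).arity)).val)) →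
      Provable cutEnabled (Formula.dconn i A ::ₘ ∑ c : {c // c ∈ p.parts}, Γ c)

/-! ## Proof structures for `MLL(Cᵢ)` -/

/-- The kinds of links of a proof-structure for `MLL(Cᵢ)`: axiom links, cut links,
`⊗`-links, `⅋`-links, `Cᵢ`-links and `Cᵢ*`-links. -/
inductive LinkKind (I : Type) : Type
  | ax : LinkKind I
  | cut : LinkKind I
  | tens : LinkKind I
  | parr : LinkKind I
  | conn : I → LinkKind I
  | dconn : I → LinkKind I

/-- The raw data of a proof-structure: a graph whose nodes are labelled by formulas and
whose edges are organized into links; each link has a kind, an (ordered) list of premise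
nodes and a list of conclusion nodes. -/
structure PrePS (I : Type) (Csig : I → GenConn) : Type 1 where
  Node : Type
  label : Node → Formula I Csig
  Link : Type
  kind : Link → LinkKind I
  prem : Link → List Node
  concl : Link → List Node

/-- A proof-structure for `MLL(Cᵢ)`: a nonempty finite graph of formula-labelled nodes
organized into axiom links (two conclusions `A` and `~A`, no premises), cut links (two
premises `A` and `~A`, no conclusion), `⊗`- and `⅋`-links, and `C`-links (premises
`A₁,…,Aₘ`, conclusion `Cᵢ(A₁,…,Aₘ)`, resp. `Cᵢ*(A₁,…,Aₘ)`), such that each node is the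
premise of at most one link and the conclusion of exactly one link. -/
structure ProofStructure (I : Type) (Csig : I → GenConn) : Type 1 where
  pre : PrePS I Csig
  node_finite : Finite pre.Node
  node_nonempty : Nonempty pre.Node
  link_finite : Finite pre.Link
  wf_ax : ∀ l, pre.kind l = .ax → pre.prem l = [] ∧
      ∃ a b, pre.concl l = [a, b] ∧ pre.label b = (pre.label a).dual
  wf_cut : ∀ l, pre.kind l = .cut → pre.concl l = [] ∧
      ∃ a b, pre.prem l = [a, b] ∧ pre.label b = (pre.label a).dual
  wf_tens : ∀ l, pre.kind l = .tens → ∃ a b c, pre.prem l = [a, b] ∧ pre.concl l = [c] ∧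
      pre.label c = .tens (pre.label a) (pre.label b)
  wf_parr : ∀ l, pre.kind l = .parr → ∃ a b c, pre.prem l = [a, b] ∧ pre.concl l = [c] ∧
      pre.label c = .parr (pre.label a) (pre.label b)
  wf_conn : ∀ l i, pre.kind l = .conn i →
      ∃ (args : Fin (Csig i).arity → pre.Node) (c : pre.Node),
        pre.prem l = List.ofFn args ∧ pre.concl l = [c] ∧
        pre.label c = .conn i fun k => pre.label (args k)
  wf_dconn : ∀ l i, pre.kind l = .dconn i →
      ∃ (args : Fin (Csig i).arity → pre.Node) (c : pre.Node),
        pre.prem l = List.ofFn args ∧ pre.concl l = [c] ∧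
        pre.label c = .dconn i fun k => pre.label (args k)
  prem_nodup : ∀ l, (pre.prem l).Nodup
  concl_nodup : ∀ l, (pre.concl l).Nodup
  concl_unique : ∀ v : pre.Node, ∃! l, v ∈ pre.concl l
  prem_unique : ∀ (v : pre.Node) (l l' : pre.Link),
      v ∈ pre.prem l → v ∈ pre.prem l' → l = l'

namespace PrePS

variable {I : Type} {Csig : I → GenConn}

/-- A node is terminal if it is the premise of no link. -/
def Terminal (S : PrePS I Csig) (v : S.Node) : Prop := ∀ l, v ∉ S.prem l

/-- A link is terminal if all its conclusions are terminal nodes. -/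
def TerminalLink (S : PrePS I Csig) (l : S.Link) : Prop :=
  ∀ v ∈ S.concl l, S.Terminal v

/-- The full graph of a proof-structure: the two conclusions of an axiom link are
adjacent, the two premises of a cut link are adjacent, and each premise of a link is
adjacent to each of its conclusions. -/
def fullGraph (S : PrePS I Csig) : SimpleGraph S.Node :=
  SimpleGraph.fromRel fun a b =>
    (∃ l, S.kind l = .ax ∧ S.concl l = [a, b]) ∨
    (∃ l, S.kind l = .cut ∧ S.prem l = [a, b]) ∨
    (∃ l, a ∈ S.prem l ∧ b ∈ S.concl l)

/-- A terminal link is splitting if removing its (conclusion) node and the incident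
edges separates the proof-structure into disjoint sub-proof-structures, i.e. the induced
graph on the remaining nodes is disconnected. -/
def Splitting (S : PrePS I Csig) (l : S.Link) : Prop :=
  ¬ (S.fullGraph.induce {v : S.Node | v ∉ S.concl l}).Connected

/-- A `⅋ᵏ`-link: a binary `⅋`-link, or a (dual) generalized-connective link whose
partition set is the one of `⅋ᵏ`. -/
def IsParLikeLink (S : PrePS I Csig) (l : S.Link) : Prop :=
  S.kind l = .parr ∨
  (∃ i, S.kind l = .conn i ∧ IsParSet (Csig i).rules) ∨
  (∃ i, S.kind l = .dconn i ∧ IsParSet (Csig i).dualRules)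

/-- A `C`-link (in the wide sense used for splitting): a `⊗`-link or a
generalized-connective link, which is not a `⅋ᵏ`-link. -/
def IsCLink (S : PrePS I Csig) (l : S.Link) : Prop :=
  (S.kind l = .tens ∨ (∃ i, S.kind l = .conn i) ∨ (∃ i, S.kind l = .dconn i)) ∧
  ¬ S.IsParLikeLink l

/-- The correctness graph determined by a selection `sel` of premise positions for each
link: the two conclusions of an axiom link are adjacent, the two premises of a cut link
are adjacent, and the `k`-th premise of a link is adjacent to its conclusion exactly when
`k ∈ sel l`. -/
def selGraph (S : PrePS I Csig) (sel : S.Link → Finset ℕ) : SimpleGraph S.Node :=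
  SimpleGraph.fromRel fun a b =>
    (∃ l, S.kind l = .ax ∧ S.concl l = [a, b]) ∨
    (∃ l, S.kind l = .cut ∧ S.prem l = [a, b]) ∨
    (∃ l, ∃ k ∈ sel l, (S.prem l)[k]? = some a ∧ b ∈ S.concl l)

end PrePS

/-- A transversal of a partition `p`: a set containing exactly one element of each class
of `p`. -/
def IsTransversal {m : ℕ} (p : SetPartition m) (t : Finset (Fin m)) : Prop :=
  ∀ c ∈ p.parts, ∃! x, x ∈ t ∧ x ∈ c

/-- A **partition switching** of a proof-structure: for each generalized-connective link
it selects a partition `p` in the corresponding partition set together with exactly one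
element of each class of `p` (the premise edges to the selected elements are kept, all
other premise edges of the link are deleted).  On a `⊗`-link both premise edges are kept
(the transversal of `{(1),(2)}`), on a `⅋`-link exactly one premise edge is kept
(a transversal of `{(1,2)}`). -/
structure PartitionSwitching {I : Type} {Csig : I → GenConn} (S : PrePS I Csig) where
  sel : S.Link → Finset ℕ
  valid_tens : ∀ l, S.kind l = .tens → sel l = {0, 1}
  valid_parr : ∀ l, S.kind l = .parr → sel l = {0} ∨ sel l = {1}
  valid_conn : ∀ l i, S.kind l = .conn i → ∃ p ∈ (Csig i).rules,
      ∃ t : Finset (Fin (Csig i).arity), IsTransversal p t ∧ sel l = t.image Fin.val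
  valid_dconn : ∀ l i, S.kind l = .dconn i → ∃ p ∈ (Csig i).dualRules,
      ∃ t : Finset (Fin (Csig i).arity), IsTransversal p t ∧ sel l = t.image Fin.val
  valid_other : ∀ l, S.kind l = .ax ∨ S.kind l = .cut → sel l = ∅

/-- A proof-structure is a **proof-net in the sense of the partition switching** iff for
every partition switching the associated correctness graph is connected and acyclic. -/
def PrePS.PartitionProofNet {I : Type} {Csig : I → GenConn} (S : PrePS I Csig) : Prop :=
  ∀ sw : PartitionSwitching S,
    (S.selGraph sw.sel).Connected ∧ (S.selGraph sw.sel).IsAcyclic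

/-! ## The Danos–Regnier switching for generalized connectives -/

/-- The partition set of a partition of `Fin m`, re-encoded as a set of sets of premise
positions. -/
def partsToNat {m : ℕ} (p : SetPartition m) : Finset (Finset ℕ) :=
  p.parts.image fun c => c.image Fin.val

/-- A **Danos–Regnier switching** of a proof-structure: for each generalized-connective
link it selects a partition `p` in the corresponding partition set together with one
class of `p`.  (Binary `⊗`-links carry the partition `{(1),(2)}` and `⅋`-links the
partition `{(1,2)}`.) -/
structure DRSwitching {I : Type} {Csig : I → GenConn} (S : PrePS I Csig) where
  part : S.Link → Finset (Finset ℕ)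
  selClass : S.Link → Finset ℕ
  sel_mem : ∀ l, (S.kind l = .tens ∨ S.kind l = .parr ∨
      (∃ i, S.kind l = .conn i) ∨ (∃ i, S.kind l = .dconn i)) → selClass l ∈ part l
  valid_tens : ∀ l, S.kind l = .tens → part l = {{0}, {1}}
  valid_parr : ∀ l, S.kind l = .parr → part l = {({0, 1} : Finset ℕ)}
  valid_conn : ∀ l i, S.kind l = .conn i → ∃ p ∈ (Csig i).rules, part l = partsToNat p
  valid_dconn : ∀ l i, S.kind l = .dconn i → ∃ p ∈ (Csig i).dualRules, part l = partsToNat p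
  valid_other : ∀ l, S.kind l = .ax ∨ S.kind l = .cut → part l = ∅ ∧ selClass l = ∅

/-- The correctness graph of a Danos–Regnier switching: the two conclusions of an axiom
link are adjacent and the two premises of a cut link are adjacent; at each switched link
the premises belonging to the same class of the chosen partition are connected to one
another (consecutive premises of a class are adjacent), and every edge from a class to
the node of the link is deleted except one edge from the selected class (the premise of
the selected class with least position is adjacent to the conclusion). -/
def PrePS.drGraph {I : Type} {Csig : I → GenConn} (S : PrePS I Csig)
    (sw : DRSwitching S) : SimpleGraph S.Node :=
  SimpleGraph.fromRel fun a b =>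
    (∃ l, S.kind l = .ax ∧ S.concl l = [a, b]) ∨
    (∃ l, S.kind l = .cut ∧ S.prem l = [a, b]) ∨
    (∃ l, ∃ c ∈ sw.part l, ∃ j ∈ c, ∃ k ∈ c, j < k ∧ (∀ x ∈ c, ¬ (j < x ∧ x < k)) ∧
      (S.prem l)[j]? = some a ∧ (S.prem l)[k]? = some b) ∨
    (∃ l j, (∃ h : (sw.selClass l).Nonempty, j = (sw.selClass l).min' h) ∧
      (S.prem l)[j]? = some a ∧ b ∈ S.concl l)

/-- A proof-structure is **correct in the sense of the Danos–Regnier switching** iff for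
every Danos–Regnier switching the associated correctness graph is connected and
acyclic. -/
def PrePS.DRProofNet {I : Type} {Csig : I → GenConn} (S : PrePS I Csig) : Prop :=
  ∀ sw : DRSwitching S, (S.drGraph sw).Connected ∧ (S.drGraph sw).IsAcyclic

/-- `S` is (isomorphic to) the proof-structure with exactly two terminal nodes
`Cᵢ(A₁,…,Aₙ)` and `Cᵢ*(~A₁,…,~Aₙ)`, where `A₁,…,Aₙ` are the atoms `a 1, …, a n`,
consisting of a `Cᵢ`-link, a `Cᵢ*`-link, and, for each `k`, an atomic axiom link joining
`A_k` and `~A_k`. -/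
def IsExpansionPS {I : Type} {Csig : I → GenConn} (i : I) (a : Fin (Csig i).arity → ℕ)
    (S : PrePS I Csig) : Prop :=
  ∃ (eN : S.Node ≃ (Fin (Csig i).arity ⊕ Fin (Csig i).arity) ⊕ Bool)
    (eL : S.Link ≃ Fin (Csig i).arity ⊕ Bool),
    (∀ k, S.label (eN.symm (.inl (.inl k))) = .pos (a k)) ∧
    (∀ k, S.label (eN.symm (.inl (.inr k))) = .neg (a k)) ∧
    S.label (eN.symm (.inr true)) = .conn i (fun k => .pos (a k)) ∧
    S.label (eN.symm (.inr false)) = .dconn i (fun k => .neg (a k)) ∧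
    (∀ k, S.kind (eL.symm (.inl k)) = .ax ∧
      S.prem (eL.symm (.inl k)) = [] ∧
      S.concl (eL.symm (.inl k)) = [eN.symm (.inl (.inl k)), eN.symm (.inl (.inr k))]) ∧
    S.kind (eL.symm (.inr true)) = .conn i ∧
    S.prem (eL.symm (.inr true)) = List.ofFn (fun k => eN.symm (.inl (.inl k))) ∧
    S.concl (eL.symm (.inr true)) = [eN.symm (.inr true)] ∧
    S.kind (eL.symm (.inr false)) = .dconn i ∧
    S.prem (eL.symm (.inr false)) = List.ofFn (fun k => eN.symm (.inl (.inr k))) ∧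
    S.concl (eL.symm (.inr false)) = [eN.symm (.inr false)]

/-! ## Sequent proofs of `MLL(Cᵢ)` with tracked occurrences, and the translation `S(−)`
to proof structures -/

/-- Sequent-calculus proofs of `MLL(Cᵢ)` with sequents given as lists (so that formula
occurrences are tracked and the translation to proof-structures is well defined).  The
`exch` constructor permutes a sequent (via an explicit bijection of positions); in the
rules for the generalized connectives the premises are indexed by an enumeration
`cls : Fin k → _` of the classes of the chosen partition `p`. -/
inductive Deriv {I : Type} (Csig : I → GenConn) : List (Formula I Csig) → Type
  | ax (m : ℕ) : Deriv Csig [.pos m, .neg m]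
  | exch {Γ Δ : List (Formula I Csig)} (e : Fin Δ.length ≃ Fin Γ.length)
      (he : ∀ k, Δ.get k = Γ.get (e k)) : Deriv Csig Γ → Deriv Csig Δ
  | cut {Γ Δ : List (Formula I Csig)} (A : Formula I Csig) :
      Deriv Csig (A :: Γ) → Deriv Csig (A.dual :: Δ) → Deriv Csig (Γ ++ Δ)
  | tens {Γ Δ : List (Formula I Csig)} (A B : Formula I Csig) :
      Deriv Csig (A :: Γ) → Deriv Csig (B :: Δ) →
      Deriv Csig (.tens A B :: (Γ ++ Δ))
  | parr {Γ : List (Formula I Csig)} (A B : Formula I Csig) :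
      Deriv Csig (A :: B :: Γ) → Deriv Csig (.parr A B :: Γ)
  | conn {i : I} (A : Fin (Csig i).arity → Formula I Csig)
      (p : SetPartition (Csig i).arity) (hp : p ∈ (Csig i).rules)
      {k : ℕ} (cls : Fin k → Finset (Fin (Csig i).arity))
      (hcls : ∀ c, c ∈ p.parts ↔ ∃ j, c = cls j) (hinj : Function.Injective cls)
      (Γs : Fin k → List (Formula I Csig))
      (prems : ∀ j, Deriv Csig (Γs j ++ ((cls j).sort (· ≤ ·)).map A)) :
      Deriv Csig (.conn i A :: (List.ofFn Γs).flatten)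
  | dconn {i : I} (A : Fin (Csig i).arity → Formula I Csig)
      (p : SetPartition (Csig i).arity) (hp : p ∈ (Csig i).dualRules)
      {k : ℕ} (cls : Fin k → Finset (Fin (Csig i).arity))
      (hcls : ∀ c, c ∈ p.parts ↔ ∃ j, c = cls j) (hinj : Function.Injective cls)
      (Γs : Fin k → List (Formula I Csig))
      (prems : ∀ j, Deriv Csig (Γs j ++ ((cls j).sort (· ≤ ·)).map A)) :
      Deriv Csig (.dconn i A :: (List.ofFn Γs).flatten)

/-- The result of translating a sequent proof: the underlying data of a proof-structure,
together with the map sending the position of each formula occurrence of the end-sequent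
to the corresponding (terminal) node. -/
structure TransRes (I : Type) (Csig : I → GenConn) : Type 1 where
  S : PrePS I Csig
  cpos : ℕ → S.Node

/-- The standard recursive translation `S(−)` from sequent proofs of `MLL(Cᵢ)` to proof
structures. -/
noncomputable def toPre {I : Type} {Csig : I → GenConn} :
    {Γ : List (Formula I Csig)} → Deriv Csig Γ → TransRes I Csig
  | _, .ax m =>
    { S := { Node := Fin 2, label := ![.pos m, .neg m], Link := Unit,
             kind := fun _ => .ax, prem := fun _ => [], concl := fun _ => [0, 1] },
      cpos := fun n => if n = 0 then 0 else 1 }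
  | _, @Deriv.exch _ _ _ Δ e _ d =>
    let R := toPre d
    { S := R.S,
      cpos := fun n => if h : n < Δ.length then R.cpos (e ⟨n, h⟩) else R.cpos 0 }
  | _, @Deriv.cut _ _ Γ Δ A d₁ d₂ =>
    let R₁ := toPre d₁
    let R₂ := toPre d₂
    { S := { Node := R₁.S.Node ⊕ R₂.S.Node,
             label := Sum.elim R₁.S.label R₂.S.label,
             Link := (R₁.S.Link ⊕ R₂.S.Link) ⊕ Unit,
             kind := Sum.elim (Sum.elim R₁.S.kind R₂.S.kind) fun _ => .cut,
             prem := Sum.elim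
               (Sum.elim (fun l => (R₁.S.prem l).map Sum.inl)
                         (fun l => (R₂.S.prem l).map Sum.inr))
               fun _ => [Sum.inl (R₁.cpos 0), Sum.inr (R₂.cpos 0)],
             concl := Sum.elim
               (Sum.elim (fun l => (R₁.S.concl l).map Sum.inl)
                         (fun l => (R₂.S.concl l).map Sum.inr))
               fun _ => [] },
      cpos := fun n => if n < Γ.length then Sum.inl (R₁.cpos (n + 1))
                       else Sum.inr (R₂.cpos (n - Γ.length + 1)) }
  | _, @Deriv.tens _ _ Γ Δ A B d₁ d₂ =>
    let R₁ := toPre d₁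
    let R₂ := toPre d₂
    { S := { Node := (R₁.S.Node ⊕ R₂.S.Node) ⊕ Unit,
             label := Sum.elim (Sum.elim R₁.S.label R₂.S.label) fun _ => .tens A B,
             Link := (R₁.S.Link ⊕ R₂.S.Link) ⊕ Unit,
             kind := Sum.elim (Sum.elim R₁.S.kind R₂.S.kind) fun _ => .tens,
             prem := Sum.elim
               (Sum.elim (fun l => (R₁.S.prem l).map fun w => Sum.inl (Sum.inl w))
                         (fun l => (R₂.S.prem l).map fun w => Sum.inl (Sum.inr w)))
               fun _ => [Sum.inl (Sum.inl (R₁.cpos 0)), Sum.inl (Sum.inr (R₂.cpos 0))],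
             concl := Sum.elim
               (Sum.elim (fun l => (R₁.S.concl l).map fun w => Sum.inl (Sum.inl w))
                         (fun l => (R₂.S.concl l).map fun w => Sum.inl (Sum.inr w)))
               fun _ => [Sum.inr ()] },
      cpos := fun n =>
        if n = 0 then Sum.inr ()
        else if n ≤ Γ.length then Sum.inl (Sum.inl (R₁.cpos n))
        else Sum.inl (Sum.inr (R₂.cpos (n - Γ.length))) }
  | _, @Deriv.parr _ _ Γ A B d =>
    let R := toPre d
    { S := { Node := R.S.Node ⊕ Unit,
             label := Sum.elim R.S.label fun _ => .parr A B,
             Link := R.S.Link ⊕ Unit,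
             kind := Sum.elim R.S.kind fun _ => .parr,
             prem := Sum.elim (fun l => (R.S.prem l).map Sum.inl)
               fun _ => [Sum.inl (R.cpos 0), Sum.inl (R.cpos 1)],
             concl := Sum.elim (fun l => (R.S.concl l).map Sum.inl)
               fun _ => [Sum.inr ()] },
      cpos := fun n => if n = 0 then Sum.inr () else Sum.inl (R.cpos (n + 1)) }
  | _, @Deriv.conn _ _ i A p hp k cls hcls hinj Γs prems =>
    let R := fun j => toPre (prems j)
    have exj : ∀ t : Fin (Csig i).arity, ∃ j, t ∈ cls j := fun t => by
      obtain ⟨c, hc, htc⟩ := p.exists_mem (Finset.mem_univ t)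
      obtain ⟨j, rfl⟩ := (hcls c).1 hc
      exact ⟨j, htc⟩
    { S := { Node := (Σ j : Fin k, (R j).S.Node) ⊕ Unit,
             label := Sum.elim (fun x => (R x.1).S.label x.2) fun _ => .conn i A,
             Link := (Σ j : Fin k, (R j).S.Link) ⊕ Unit,
             kind := Sum.elim (fun x => (R x.1).S.kind x.2) fun _ => .conn i,
             prem := Sum.elim
               (fun x => ((R x.1).S.prem x.2).map fun w => Sum.inl ⟨x.1, w⟩)
               fun _ => List.ofFn fun t : Fin (Csig i).arity =>
                 Sum.inl ⟨Classical.choose (exj t),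
                   (R (Classical.choose (exj t))).cpos
                     ((Γs (Classical.choose (exj t))).length +
                       ((cls (Classical.choose (exj t))).sort (· ≤ ·)).idxOf t)⟩,
             concl := Sum.elim
               (fun x => ((R x.1).S.concl x.2).map fun w => Sum.inl ⟨x.1, w⟩)
               fun _ => [Sum.inr ()] },
      cpos := fun n =>
        if n = 0 then Sum.inr ()
        else
          (((List.ofFn (fun j : Fin k =>
              (List.range (Γs j).length).map (fun t =>
                (Sum.inl ⟨j, (R j).cpos t⟩ :
                  (Σ j : Fin k, (R j).S.Node) ⊕ Unit)))).flatten)[n - 1]?).getD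
            (Sum.inr ()) }
  | _, @Deriv.dconn _ _ i A p hp k cls hcls hinj Γs prems =>
    let R := fun j => toPre (prems j)
    have exj : ∀ t : Fin (Csig i).arity, ∃ j, t ∈ cls j := fun t => by
      obtain ⟨c, hc, htc⟩ := p.exists_mem (Finset.mem_univ t)
      obtain ⟨j, rfl⟩ := (hcls c).1 hc
      exact ⟨j, htc⟩
    { S := { Node := (Σ j : Fin k, (R j).S.Node) ⊕ Unit,
             label := Sum.elim (fun x => (R x.1).S.label x.2) fun _ => .dconn i A,
             Link := (Σ j : Fin k, (R j).S.Link) ⊕ Unit,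
             kind := Sum.elim (fun x => (R x.1).S.kind x.2) fun _ => .dconn i,
             prem := Sum.elim
               (fun x => ((R x.1).S.prem x.2).map fun w => Sum.inl ⟨x.1, w⟩)
               fun _ => List.ofFn fun t : Fin (Csig i).arity =>
                 Sum.inl ⟨Classical.choose (exj t),
                   (R (Classical.choose (exj t))).cpos
                     ((Γs (Classical.choose (exj t))).length +
                       ((cls (Classical.choose (exj t))).sort (· ≤ ·)).idxOf t)⟩,
             concl := Sum.elim
               (fun x => ((R x.1).S.concl x.2).map fun w => Sum.inl ⟨x.1, w⟩)
               fun _ => [Sum.inr ()] },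
      cpos := fun n =>
        if n = 0 then Sum.inr ()
        else
          (((List.ofFn (fun j : Fin k =>
              (List.range (Γs j).length).map (fun t =>
                (Sum.inl ⟨j, (R j).cpos t⟩ :
                  (Σ j : Fin k, (R j).S.Node) ⊕ Unit)))).flatten)[n - 1]?).getD
            (Sum.inr ()) }

/-- An isomorphism of (the raw data of) proof-structures: label-, kind-, premise- and
conclusion-preserving bijections of nodes and links. -/
structure PreIso {I : Type} {Csig : I → GenConn} (S T : PrePS I Csig) : Type 1 where
  nodeEquiv : S.Node ≃ T.Node
  linkEquiv : S.Link ≃ T.Link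
  label_eq : ∀ v, T.label (nodeEquiv v) = S.label v
  kind_eq : ∀ l, T.kind (linkEquiv l) = S.kind l
  prem_eq : ∀ l, T.prem (linkEquiv l) = (S.prem l).map nodeEquiv
  concl_eq : ∀ l, T.concl (linkEquiv l) = (S.concl l).map nodeEquiv

/-- A proof-structure `S` is **sequentializable** if `S = S(π)` (up to isomorphism) for
some sequent proof `π` of `MLL(Cᵢ)`. -/
def Sequentializable {I : Type} {Csig : I → GenConn} (S : ProofStructure I Csig) : Prop :=
  ∃ (Γ : List (Formula I Csig)) (d : Deriv Csig Γ),
    Nonempty (PreIso S.pre (toPre d).S)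


section GraphAux

open SimpleGraph

variable {V : Type*} [Fintype V] [DecidableEq V] {G : SimpleGraph V}

lemma conn_card_le (hG : G.Connected) :
    Fintype.card V ≤ G.edgeSet.ncard + 1 := by
  haveI : Fintype G.edgeSet := Fintype.ofFinite _
  rw [Set.ncard_eq_toFinset_card' G.edgeSet]
  haveI : Nonempty V := hG.nonempty
  classical
  obtain ⟨r⟩ := ‹Nonempty V›
  -- for each v ≠ r choose a neighbor closer to r
  have key : ∀ v : V, v ≠ r → ∃ u, G.Adj v u ∧ G.dist u r < G.dist v r := by
    intro v hv
    obtain ⟨p, hp⟩ := hG.exists_walk_length_eq_dist v r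
    cases p with
    | nil => exact absurd rfl hv
    | cons h q =>
      refine ⟨_, h, ?_⟩
      have := SimpleGraph.dist_le q
      simp only [SimpleGraph.Walk.length_cons] at hp
      omega
  choose u hadj hdist using key
  have hinj : Set.InjOn (fun v : V => if h : v = r then (Sym2.mk v v) else Sym2.mk v (u v h))
      ↑(Finset.univ.erase r) := by
    intro a ha b hb hab
    simp only [Finset.coe_erase, Set.mem_diff, Finset.mem_coe, Finset.mem_univ,
      Set.mem_singleton_iff] at ha hb
    simp only at hab
    rw [dif_neg ha.2, dif_neg hb.2, Sym2.eq_iff] at hab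
    rcases hab with h | h
    · exact h.1
    · -- a = u b, u a = b
      exfalso
      obtain ⟨e1', e2'⟩ := h
      have e1 : a = u b hb.2 := e1'
      have e2 : u a ha.2 = b := e2'
      have d1 := hdist a ha.2
      have d2 := hdist b hb.2
      rw [e2] at d1
      rw [← e1] at d2
      omega
  have hmaps : ∀ a ∈ Finset.univ.erase r,
      (fun v : V => if h : v = r then (Sym2.mk v v) else Sym2.mk v (u v h)) a ∈ G.edgeSet.toFinset := by
    intro a ha
    have ha' : a ≠ r := (Finset.mem_erase.1 ha).1
    simp only [dif_neg ha', Set.mem_toFinset, SimpleGraph.mem_edgeSet]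
    exact hadj a ha'
  have hle := Finset.card_le_card_of_injOn _  hmaps hinj
  have hc : (Finset.univ.erase r).card = Fintype.card V - 1 := by
    rw [Finset.card_erase_of_mem (Finset.mem_univ r), Finset.card_univ]
  have hpos : 1 ≤ Fintype.card V := Fintype.card_pos
  omega

omit [Fintype V] [DecidableEq V] in
lemma preconn_delete_of_not_bridge {u v : V} (hG : G.Preconnected)
    (hr : (G \ fromEdgeSet {s(u, v)}).Reachable u v) :
    (G \ fromEdgeSet {s(u, v)}).Preconnected := by
  set G' := G \ fromEdgeSet {s(u, v)} with hG'
  have step : ∀ x y : V, G.Adj x y → G'.Reachable x y := by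
    intro x y hxy
    by_cases he : s(x, y) = s(u, v)
    · rw [Sym2.eq_iff] at he
      rcases he with ⟨rfl, rfl⟩ | ⟨rfl, rfl⟩
      · exact hr
      · exact hr.symm
    · exact SimpleGraph.Adj.reachable (by
        simp only [hG', SimpleGraph.sdiff_adj, SimpleGraph.fromEdgeSet_adj]
        exact ⟨hxy, fun hc => he hc.1⟩)
  intro x y
  obtain ⟨w⟩ := hG x y
  induction w with
  | nil => exact SimpleGraph.Reachable.refl _
  | cons h p ih => exact (step _ _ h).trans ih

lemma acyclic_of_card (hG : G.Connected)
    (hcard : G.edgeSet.ncard + 1 ≤ Fintype.card V) : G.IsAcyclic := by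
  intro v c hc
  have hlen := hc.three_le_length
  have hne : c.edges ≠ [] := by
    intro h
    rw [← SimpleGraph.Walk.length_edges, h] at hlen
    simp at hlen
  obtain ⟨⟨x, y⟩, hxy⟩ := Quot.exists_rep (c.edges.head hne)
  have hmem : s(x, y) ∈ c.edges := by
    show Quot.mk _ (x, y) ∈ c.edges
    rw [hxy]; exact List.head_mem hne
  have hedge : s(x, y) ∈ G.edgeSet := SimpleGraph.Walk.edges_subset_edgeSet c hmem
  have hnb : ¬ G.IsBridge s(x, y) := by
    rw [SimpleGraph.isBridge_iff_forall_cycle_notMem hedge]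
    push_neg
    exact ⟨v, c, hc, hmem⟩
  rw [SimpleGraph.isBridge_iff] at hnb
  push_neg at hnb
  have hadj : G.Adj x y := hedge
  have hreach := hnb

  set G' := G \ fromEdgeSet {s(x, y)} with hG'
  have hconn' : G'.Connected := by
    haveI : Nonempty V := hG.nonempty
    exact ⟨preconn_delete_of_not_bridge hG.preconnected hreach⟩
  have hsub : G'.edgeSet = G.edgeSet \ {s(x, y)} := by
    rw [hG', SimpleGraph.edgeSet_sdiff, SimpleGraph.edgeSet_fromEdgeSet]
    ext f
    simp only [Set.mem_diff, Set.mem_setOf_eq, Set.mem_singleton_iff]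
    constructor
    · rintro ⟨hf, hf2⟩
      refine ⟨hf, fun hc2 => hf2 ⟨hc2, ?_⟩⟩
      subst hc2
      exact hadj.ne
    · rintro ⟨hf, hf2⟩
      exact ⟨hf, fun hc2 => hf2 hc2.1⟩
  have hfin : G.edgeSet.Finite := Set.Finite.subset (Set.finite_univ) (Set.subset_univ _)
  have hcard' : G'.edgeSet.ncard = G.edgeSet.ncard - 1 := by
    rw [hsub, Set.ncard_diff_singleton_of_mem hedge]
  have hpos : 1 ≤ G.edgeSet.ncard := by
    have := (Set.ncard_pos hfin).2 ⟨_, hedge⟩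
    omega
  have := conn_card_le hconn'
  omega
end GraphAux

/-! ### Auxiliary partition lemmas -/

section PartitionAux

lemma parts_eq_singleton_univ {n : ℕ} {p : SetPartition n}
    (h : (Finset.univ : Finset (Fin n)) ∈ p.parts) : p.parts = {Finset.univ} := by
  refine Finset.eq_singleton_iff_unique_mem.2 ⟨h, fun c hc => ?_⟩
  obtain ⟨x, hx⟩ := p.nonempty_of_mem_parts hc
  exact p.eq_of_mem_parts hc h hx (Finset.mem_univ x)

/-- A partition with all classes singletons is unique. -/
lemma singleton_parts_eq {n : ℕ} {p : SetPartition n} (h : ∀ c ∈ p.parts, c.card = 1) :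
    p.parts = Finset.univ.image fun x : Fin n => {x} := by
  ext c
  simp only [Finset.mem_image, Finset.mem_univ, true_and]
  constructor
  · intro hc
    obtain ⟨x, hx⟩ := Finset.card_eq_one.1 (h c hc)
    exact ⟨x, hx.symm⟩
  · rintro ⟨x, rfl⟩
    obtain ⟨c, hc, hxc⟩ := p.exists_mem (Finset.mem_univ x)
    obtain ⟨y, hy⟩ := Finset.card_eq_one.1 (h c hc)
    rw [hy] at hxc
    rw [Finset.mem_singleton] at hxc
    subst hxc
    rwa [← hy]

lemma card_parts_of_singletons {n : ℕ} {p : SetPartition n} (h : ∀ c ∈ p.parts, c.card = 1) :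
    p.parts.card = n := by
  have := p.sum_card_parts
  rw [Finset.sum_congr rfl h] at this
  simpa using this

lemma singletons_of_card_parts {n : ℕ} {p : SetPartition n} (h : p.parts.card = n) :
    ∀ c ∈ p.parts, c.card = 1 := by
  have hsum := p.sum_card_parts
  simp only [Finset.card_univ, Fintype.card_fin] at hsum
  intro c hc
  by_contra hne
  have h1 : ∀ d ∈ p.parts, 1 ≤ d.card := fun d hd =>
    Finset.card_pos.2 (p.nonempty_of_mem_parts hd)
  have h2 : 2 ≤ c.card := by
    have := h1 c hc
    omega
  have : p.parts.card - 1 + 2 ≤ ∑ d ∈ p.parts, d.card := by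
    rw [← Finset.sum_erase_add _ _ hc]
    have : p.parts.card - 1 ≤ ∑ d ∈ p.parts.erase c, d.card := by
      calc p.parts.card - 1 = (p.parts.erase c).card := by
            rw [Finset.card_erase_of_mem hc]
        _ = ∑ d ∈ p.parts.erase c, 1 := by simp
        _ ≤ _ := Finset.sum_le_sum fun d hd => h1 d (Finset.mem_of_mem_erase hd)
    omega
  have hposcard : 1 ≤ p.parts.card := Finset.card_pos.2 ⟨c, hc⟩
  omega

lemma parts_singleton_of_card_one {n : ℕ} {p : SetPartition n} (h : p.parts.card = 1) :
    p.parts = {Finset.univ} := by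
  obtain ⟨c, hc⟩ := Finset.card_eq_one.1 h
  have : c = Finset.univ := by
    have := p.sup_parts
    rw [hc] at this
    simpa using this
  rw [hc, this]

/-- If the full partition belongs to `rules`, then `rules` is the partition set of `⅋ⁿ`. -/
lemma isParSet_of_univ_mem (G : GenConn) {p : SetPartition G.arity}
    (hp : p ∈ G.rules) (hfull : p.parts = {Finset.univ}) : IsParSet G.rules := by
  obtain ⟨q0, hq0⟩ := G.dualRules_nonempty
  have hq0' : q0 ∈ orthCompl G.rules := G.orth ▸ hq0
  have horth : p.Orthogonal q0 := hq0' p hp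
  have hq0card : q0.parts.card = G.arity := by
    have := horth.2
    rw [hfull] at this
    simp at this
    omega
  refine Set.eq_of_subset_of_subset ?_ ?_
  · intro r hr
    have hr' : r ∈ orthCompl G.dualRules := G.orth' ▸ hr
    have horth2 : q0.Orthogonal r := hr' q0 hq0
    have : r.parts.card = 1 := by
      have := horth2.2
      omega
    exact parts_singleton_of_card_one this
  · intro r hr
    have : r = p := Finpartition.ext (by rw [hfull]; exact hr)
    rwa [this]

/-- If the full partition belongs to `dualRules`, then `rules` is the partition set of `⊗ⁿ`. -/
lemma isTensorSet_of_univ_mem_dual (G : GenConn) {q : SetPartition G.arity}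
    (hq : q ∈ G.dualRules) (hfull : q.parts = {Finset.univ}) : IsTensorSet G.rules := by
  obtain ⟨p0, hp0⟩ := G.rules_nonempty
  have hp0' : p0 ∈ orthCompl G.dualRules := G.orth' ▸ hp0
  have horth : q.Orthogonal p0 := hp0' q hq
  have hp0card : p0.parts.card = G.arity := by
    have := horth.2
    rw [hfull] at this
    simp at this
    omega
  have hp0single : ∀ c ∈ p0.parts, c.card = 1 := singletons_of_card_parts hp0card
  refine Set.eq_of_subset_of_subset ?_ ?_
  · intro r hr
    have hr' : r ∈ orthCompl G.dualRules := G.orth' ▸ hr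
    have horth2 : q.Orthogonal r := hr' q hq
    have : r.parts.card = G.arity := by
      have := horth2.2
      rw [hfull] at this
      simp at this
      omega
    exact singletons_of_card_parts this
  · intro r hr
    have : r = p0 := Finpartition.ext (by
      rw [singleton_parts_eq hr, singleton_parts_eq hp0single])
    rwa [this]

end PartitionAux

/-! ### The concrete expansion correctness graph -/

section ConcreteGraph
open SimpleGraph

variable {n : ℕ}

/-- Consecutive elements of a finset. -/
def consecIn (c : Finset (Fin n)) (j k : Fin n) : Prop :=
  j ∈ c ∧ k ∈ c ∧ j < k ∧ ∀ x ∈ c, ¬ (j < x ∧ x < k)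

def cRel (p q : SetPartition n) (cp cq : Finset (Fin n)) :
    ((Fin n ⊕ Fin n) ⊕ Bool) → ((Fin n ⊕ Fin n) ⊕ Bool) → Prop := fun a b =>
  (∃ k : Fin n, a = .inl (.inl k) ∧ b = .inl (.inr k)) ∨
  (∃ c ∈ p.parts, ∃ j k : Fin n, consecIn c j k ∧ a = .inl (.inl j) ∧ b = .inl (.inl k)) ∨
  (∃ c ∈ q.parts, ∃ j k : Fin n, consecIn c j k ∧ a = .inl (.inr j) ∧ b = .inl (.inr k)) ∨
  (∃ hcp : cp.Nonempty, a = .inl (.inl (cp.min' hcp)) ∧ b = .inr true) ∨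
  (∃ hcq : cq.Nonempty, a = .inl (.inr (cq.min' hcq)) ∧ b = .inr false)

def cGraph (p q : SetPartition n) (cp cq : Finset (Fin n)) : SimpleGraph ((Fin n ⊕ Fin n) ⊕ Bool) :=
  SimpleGraph.fromRel (cRel p q cp cq)

variable {p q : SetPartition n} {cp cq : Finset (Fin n)}

lemma cGraph_adj_ax (k : Fin n) : (cGraph p q cp cq).Adj (.inl (.inl k)) (.inl (.inr k)) := by
  refine (SimpleGraph.fromRel_adj _ _ _).2 ⟨by simp, Or.inl ?_⟩
  exact Or.inl ⟨k, rfl, rfl⟩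

lemma cGraph_adj_p {c : Finset (Fin n)} (hc : c ∈ p.parts) {j k : Fin n}
    (h : consecIn c j k) : (cGraph p q cp cq).Adj (.inl (.inl j)) (.inl (.inl k)) := by
  refine (SimpleGraph.fromRel_adj _ _ _).2 ⟨by simp [(h.2.2.1.ne)], Or.inl ?_⟩
  exact Or.inr (Or.inl ⟨c, hc, j, k, h, rfl, rfl⟩)

lemma cGraph_adj_q {c : Finset (Fin n)} (hc : c ∈ q.parts) {j k : Fin n}
    (h : consecIn c j k) : (cGraph p q cp cq).Adj (.inl (.inr j)) (.inl (.inr k)) := by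
  refine (SimpleGraph.fromRel_adj _ _ _).2 ⟨by simp [(h.2.2.1.ne)], Or.inl ?_⟩
  exact Or.inr (Or.inr (Or.inl ⟨c, hc, j, k, h, rfl, rfl⟩))

lemma cGraph_adj_ct (hcp : cp.Nonempty) :
    (cGraph p q cp cq).Adj (.inl (.inl (cp.min' hcp))) (.inr true) := by
  refine (SimpleGraph.fromRel_adj _ _ _).2 ⟨by simp, Or.inl ?_⟩
  exact Or.inr (Or.inr (Or.inr (Or.inl ⟨hcp, rfl, rfl⟩)))

lemma cGraph_adj_cf (hcq : cq.Nonempty) :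
    (cGraph p q cp cq).Adj (.inl (.inr (cq.min' hcq))) (.inr false) := by
  refine (SimpleGraph.fromRel_adj _ _ _).2 ⟨by simp, Or.inl ?_⟩
  exact Or.inr (Or.inr (Or.inr (Or.inr ⟨hcq, rfl, rfl⟩)))

/-- Walking along consecutive elements of a finset. -/
lemma reach_chain {W : Type*} (G : SimpleGraph W) (c : Finset (Fin n)) (f : Fin n → W)
    (hadj : ∀ j k, consecIn c j k → G.Adj (f j) (f k)) :
    ∀ j ∈ c, ∀ k ∈ c, G.Reachable (f j) (f k) := by
  have main : ∀ d : ℕ, ∀ j ∈ c, ∀ k ∈ c, j ≤ k → (k : ℕ) - (j : ℕ) ≤ d →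
      G.Reachable (f j) (f k) := by
    intro d
    induction d with
    | zero =>
      intro j hj k hk hjk hd
      have : j = k := Fin.le_antisymm hjk (by omega)
      subst this
      exact SimpleGraph.Reachable.refl _
    | succ d ih =>
      intro j hj k hk hjk hd
      rcases eq_or_lt_of_le hjk with rfl | hlt
      · exact SimpleGraph.Reachable.refl _
      · have hkmem : k ∈ c.filter (j < ·) := Finset.mem_filter.2 ⟨hk, hlt⟩
        have hne : (c.filter (j < ·)).Nonempty := ⟨k, hkmem⟩
        set j' := (c.filter (j < ·)).min' hne with hj'
        have hj'mem : j' ∈ c.filter (j < ·) := Finset.min'_mem _ hne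
        have hj'c : j' ∈ c := (Finset.mem_filter.1 hj'mem).1
        have hjj' : j < j' := (Finset.mem_filter.1 hj'mem).2
        have hj'k : j' ≤ k := Finset.min'_le _ _ hkmem
        have hcons : consecIn c j j' := by
          refine ⟨hj, hj'c, hjj', fun x hx ⟨h1, h2⟩ => ?_⟩
          have : j' ≤ x := Finset.min'_le _ _ (Finset.mem_filter.2 ⟨hx, h1⟩)
          exact absurd h2 (not_lt.2 this)
        have : (k : ℕ) - (j' : ℕ) ≤ d := by
          have : (j : ℕ) < (j' : ℕ) := hjj'
          omega
        exact (hadj j j' hcons).reachable.trans (ih j' hj'c k hk hj'k this)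
  intro j hj k hk
  rcases le_total j k with h | h
  · exact main _ j hj k hk h le_rfl
  · exact (main _ k hk j hj h le_rfl).symm

lemma cGraph_connected (hp : cp ∈ p.parts) (hq : cq ∈ q.parts)
    (hconn : (meetingGraph p q).Connected) : (cGraph p q cp cq).Connected := by
  set G := cGraph p q cp cq
  set Rch : ((Fin n ⊕ Fin n) ⊕ Bool) → Prop := fun v => G.Reachable (.inr true) v with hR
  -- goodness of meeting-graph vertices
  set good : ({c // c ∈ p.parts} ⊕ {d // d ∈ q.parts}) → Prop :=
    Sum.elim (fun c => ∀ x ∈ c.1, Rch (.inl (.inl x))) (fun d => ∀ x ∈ d.1, Rch (.inl (.inr x)))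
    with hgood
  have hstep : ∀ u v, (meetingGraph p q).Adj u v → good u → good v := by
    intro u v huv hu
    rw [meetingGraph, SimpleGraph.fromRel_adj] at huv
    obtain ⟨hne, h | h⟩ := huv
    · obtain ⟨c, d, ⟨x, hx⟩, rfl, rfl⟩ := h
      rw [Finset.mem_inter] at hx
      intro y hy
      have h1 : Rch (.inl (.inl x)) := hu x hx.1
      have h2 : Rch (.inl (.inr x)) := h1.trans (cGraph_adj_ax x).reachable
      exact h2.trans (reach_chain G d.1 (fun t => .inl (.inr t))
        (fun j k hjk => cGraph_adj_q d.2 hjk) x hx.2 y hy)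
    · obtain ⟨c, d, ⟨x, hx⟩, rfl, rfl⟩ := h
      rw [Finset.mem_inter] at hx
      intro y hy
      have h1 : Rch (.inl (.inr x)) := hu x hx.2
      have h2 : Rch (.inl (.inl x)) := h1.trans (cGraph_adj_ax x).reachable.symm
      exact h2.trans (reach_chain G c.1 (fun t => .inl (.inl t))
        (fun j k hjk => cGraph_adj_p c.2 hjk) x hx.1 y hy)
  have hwalk : ∀ u v, (meetingGraph p q).Walk u v → good u → good v := by
    intro u v w
    induction w with
    | nil => exact id
    | cons h _ ih => exact fun hu => ih (hstep _ _ h hu)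
  have hcpne : cp.Nonempty := p.nonempty_of_mem_parts hp
  have hcqne : cq.Nonempty := q.nonempty_of_mem_parts hq
  have hbase : good (.inl ⟨cp, hp⟩) := by
    intro x hx
    have h1 : Rch (.inl (.inl (cp.min' hcpne))) := (cGraph_adj_ct hcpne).reachable.symm
    exact h1.trans (reach_chain G cp (fun t => .inl (.inl t))
      (fun j k hjk => cGraph_adj_p hp hjk) _ (Finset.min'_mem _ _) x hx)
  have hgoodall : ∀ v, good v := by
    intro v
    obtain ⟨w⟩ := hconn.preconnected (.inl ⟨cp, hp⟩) v
    exact hwalk _ _ w hbase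
  have hall : ∀ v, Rch v := by
    intro v
    match v with
    | .inl (.inl x) =>
      obtain ⟨c, hc, hxc⟩ := p.exists_mem (Finset.mem_univ x)
      exact hgoodall (.inl ⟨c, hc⟩) x hxc
    | .inl (.inr x) =>
      obtain ⟨c, hc, hxc⟩ := q.exists_mem (Finset.mem_univ x)
      exact hgoodall (.inr ⟨c, hc⟩) x hxc
    | .inr true => exact SimpleGraph.Reachable.refl _
    | .inr false =>
      exact (hgoodall (.inr ⟨cq, hq⟩) _ (Finset.min'_mem _ hcqne)).trans
        (cGraph_adj_cf hcqne).reachable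
  exact ⟨fun u v => (hall u).symm.trans (hall v)⟩

end ConcreteGraph

/-! ### Edge bound and acyclicity of the concrete graph -/

section ConcreteCount
open SimpleGraph
variable {n : ℕ} {p q : SetPartition n} {cp cq : Finset (Fin n)}

def consecPairs (c : Finset (Fin n)) : Finset (Fin n × Fin n) :=
  (c ×ˢ c).filter fun jk => jk.1 < jk.2 ∧ ∀ x ∈ c, ¬ (jk.1 < x ∧ x < jk.2)

lemma card_consecPairs_le (c : Finset (Fin n)) (hc : c.Nonempty) :
    (consecPairs c).card ≤ c.card - 1 := by
  classical
  have h := Finset.card_le_card_of_injOn (s := consecPairs c)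
    (fun jk : Fin n × Fin n => jk.2) (t := c.erase (c.min' hc)) ?_ ?_
  · rwa [Finset.card_erase_of_mem (Finset.min'_mem _ _)] at h
  · rintro ⟨j, k⟩ hjk
    simp only [consecPairs, Finset.mem_filter, Finset.mem_product, Finset.mem_coe] at hjk
    obtain ⟨⟨hj, hk⟩, hlt, _⟩ := hjk
    refine Finset.mem_erase.2 ⟨?_, hk⟩
    intro hkm
    have h2 := Finset.min'_le c j hj
    have hkm' : k = c.min' hc := hkm
    rw [hkm'] at hlt
    exact absurd hlt (not_lt.2 h2)
  · rintro ⟨j₁, k₁⟩ h₁ ⟨j₂, k₂⟩ h₂ hk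
    simp only [Finset.coe_filter, consecPairs, Set.mem_setOf_eq, Finset.mem_coe,
      Finset.mem_filter, Finset.mem_product] at h₁ h₂
    obtain ⟨⟨hj₁, hk₁⟩, hlt₁, hbet₁⟩ := h₁
    obtain ⟨⟨hj₂, hk₂⟩, hlt₂, hbet₂⟩ := h₂
    simp only at hk
    subst hk
    suffices hj : j₁ = j₂ by rw [hj]
    rcases lt_trichotomy j₁ j₂ with h | h | h
    · exact absurd ⟨h, hlt₂⟩ (hbet₁ j₂ hj₂)
    · exact h
    · exact absurd ⟨h, hlt₁⟩ (hbet₂ j₁ hj₁)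

lemma biUnion_consec_bound (pp : SetPartition n) {β : Type*} [DecidableEq β]
    (f : Fin n × Fin n → β) :
    (pp.parts.biUnion fun c => (consecPairs c).image f).card + pp.parts.card ≤ n := by
  classical
  have h1 : (pp.parts.biUnion fun c => (consecPairs c).image f).card ≤
      ∑ c ∈ pp.parts, ((consecPairs c).image f).card := Finset.card_biUnion_le
  have h2 : ∑ c ∈ pp.parts, ((consecPairs c).image f).card ≤
      ∑ c ∈ pp.parts, (c.card - 1) :=
    Finset.sum_le_sum fun c hc => le_trans Finset.card_image_le
      (card_consecPairs_le c (pp.nonempty_of_mem_parts hc))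
  have h3 : ∑ c ∈ pp.parts, (c.card - 1 + 1) = ∑ c ∈ pp.parts, c.card :=
    Finset.sum_congr rfl fun c hc =>
      Nat.succ_pred_eq_of_pos (Finset.card_pos.2 (pp.nonempty_of_mem_parts hc))
  rw [Finset.sum_add_distrib, Finset.sum_const, smul_eq_mul, mul_one] at h3
  have h4 := pp.sum_card_parts
  simp only [Finset.card_univ, Fintype.card_fin] at h4
  omega

lemma cGraph_edge_bound (hp : cp ∈ p.parts) (hq : cq ∈ q.parts)
    (horth : p.Orthogonal q) :
    (cGraph p q cp cq).edgeSet.ncard + 1 ≤ Fintype.card ((Fin n ⊕ Fin n) ⊕ Bool) := by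
  classical
  have hcpne : cp.Nonempty := p.nonempty_of_mem_parts hp
  have hcqne : cq.Nonempty := q.nonempty_of_mem_parts hq
  set P : Fin n → (Fin n ⊕ Fin n) ⊕ Bool := fun k => .inl (.inl k) with hP
  set Ng : Fin n → (Fin n ⊕ Fin n) ⊕ Bool := fun k => .inl (.inr k) with hNg
  set E1 := Finset.univ.image fun k : Fin n => (s(P k, Ng k) : Sym2 _) with hE1
  set E2 := p.parts.biUnion fun c => (consecPairs c).image fun jk =>
    (s(P jk.1, P jk.2) : Sym2 _) with hE2
  set E3 := q.parts.biUnion fun c => (consecPairs c).image fun jk =>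
    (s(Ng jk.1, Ng jk.2) : Sym2 _) with hE3
  set E4 : Finset (Sym2 ((Fin n ⊕ Fin n) ⊕ Bool)) :=
    {s(P (cp.min' hcpne), .inr true), s(Ng (cq.min' hcqne), .inr false)} with hE4
  have hmem : ∀ a b, cRel p q cp cq a b → s(a, b) ∈ E1 ∪ E2 ∪ E3 ∪ E4 := by
    intro a b h
    simp only [Finset.mem_union]
    rcases h with ⟨k, rfl, rfl⟩ | ⟨c, hc, j, k, hjk, rfl, rfl⟩ |
      ⟨c, hc, j, k, hjk, rfl, rfl⟩ | ⟨h1, rfl, rfl⟩ | ⟨h1, rfl, rfl⟩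
    · exact Or.inl (Or.inl (Or.inl (Finset.mem_image.2 ⟨k, Finset.mem_univ _, rfl⟩)))
    · refine Or.inl (Or.inl (Or.inr (Finset.mem_biUnion.2 ⟨c, hc, ?_⟩)))
      exact Finset.mem_image.2 ⟨(j, k), by
        simp only [consecPairs, Finset.mem_filter, Finset.mem_product]
        exact ⟨⟨hjk.1, hjk.2.1⟩, hjk.2.2.1, hjk.2.2.2⟩, rfl⟩
    · refine Or.inl (Or.inr (Finset.mem_biUnion.2 ⟨c, hc, ?_⟩))
      exact Finset.mem_image.2 ⟨(j, k), by
        simp only [consecPairs, Finset.mem_filter, Finset.mem_product]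
        exact ⟨⟨hjk.1, hjk.2.1⟩, hjk.2.2.1, hjk.2.2.2⟩, rfl⟩
    · exact Or.inr (by simp [hE4, hP, hNg])
    · exact Or.inr (by simp [hE4, hP, hNg])
  have hsub : (cGraph p q cp cq).edgeSet ⊆ ↑(E1 ∪ E2 ∪ E3 ∪ E4) := by
    intro e he
    induction e with
    | h a b =>
      rw [SimpleGraph.mem_edgeSet, cGraph, SimpleGraph.fromRel_adj] at he
      obtain ⟨hne, h | h⟩ := he
      · exact_mod_cast hmem a b h
      · rw [Sym2.eq_swap]
        exact_mod_cast hmem b a h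
  have hnc : (cGraph p q cp cq).edgeSet.ncard ≤ (E1 ∪ E2 ∪ E3 ∪ E4).card := by
    have := Set.ncard_le_ncard hsub (Finset.finite_toSet _)
    rwa [Set.ncard_coe_finset] at this
  have hcard : (E1 ∪ E2 ∪ E3 ∪ E4).card ≤ E1.card + E2.card + E3.card + E4.card := by
    calc (E1 ∪ E2 ∪ E3 ∪ E4).card ≤ (E1 ∪ E2 ∪ E3).card + E4.card := Finset.card_union_le _ _
      _ ≤ (E1 ∪ E2).card + E3.card + E4.card := by
          have := Finset.card_union_le (E1 ∪ E2) E3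
          omega
      _ ≤ E1.card + E2.card + E3.card + E4.card := by
          have := Finset.card_union_le E1 E2
          omega
  have hb1 : E1.card ≤ n := le_trans Finset.card_image_le (by simp)
  have hb2 := biUnion_consec_bound p (fun jk => (s(P jk.1, P jk.2) : Sym2 _))
  have hb3 := biUnion_consec_bound q (fun jk => (s(Ng jk.1, Ng jk.2) : Sym2 _))
  have hb4 : E4.card ≤ 2 := Finset.card_insert_le _ _ |>.trans (by simp)
  have hVcard : Fintype.card ((Fin n ⊕ Fin n) ⊕ Bool) = 2 * n + 2 := by
    simp [Fintype.card_sum]; ring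
  have hor := horth.2
  rw [hVcard]
  rw [← hE2] at hb2
  rw [← hE3] at hb3
  omega

lemma cGraph_isTree (hp : cp ∈ p.parts) (hq : cq ∈ q.parts) (horth : p.Orthogonal q) :
    (cGraph p q cp cq).Connected ∧ (cGraph p q cp cq).IsAcyclic := by
  have hconn := cGraph_connected hp hq horth.1
  exact ⟨hconn, acyclic_of_card hconn (cGraph_edge_bound hp hq horth)⟩

end ConcreteCount

/-! ### DR-correctness of the expansion structure -/

section Expansion

open SimpleGraph

lemma min'_congr {α : Type*} [LinearOrder α] {s t : Finset α} (h : t = s) (hs : s.Nonempty) :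
    s.min' hs = t.min' (h ▸ hs) := by subst h; rfl

lemma expansion_DRProofNet {I : Type} {Csig : I → GenConn} (i : I)
    (a : Fin (Csig i).arity → ℕ) (S : ProofStructure I Csig)
    (hS : IsExpansionPS i a S.pre) : S.pre.DRProofNet := by
  classical
  obtain ⟨eN, eL, hlp, hln, hlct, hlcf, hax, hkc, hpc, hcc, hkd, hpd, hcd⟩ := hS
  intro sw
  set pn : Fin (Csig i).arity → S.pre.Node := fun k => eN.symm (.inl (.inl k)) with hpn
  set nn : Fin (Csig i).arity → S.pre.Node := fun k => eN.symm (.inl (.inr k)) with hnn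
  obtain ⟨p, hp, hpart⟩ := sw.valid_conn (eL.symm (Sum.inr true)) i hkc
  obtain ⟨q, hq, hqart⟩ := sw.valid_dconn (eL.symm (Sum.inr false)) i hkd
  have hselCmem := sw.sel_mem (eL.symm (Sum.inr true)) (Or.inr (Or.inr (Or.inl ⟨i, hkc⟩)))
  rw [hpart] at hselCmem
  obtain ⟨cp, hcp, hcpeq⟩ := Finset.mem_image.1 hselCmem
  have hselDmem := sw.sel_mem (eL.symm (Sum.inr false)) (Or.inr (Or.inr (Or.inr ⟨i, hkd⟩)))
  rw [hqart] at hselDmem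
  obtain ⟨cq, hcq, hcqeq⟩ := Finset.mem_image.1 hselDmem
  have horth : p.Orthogonal q := by
    have hq' : q ∈ orthCompl (Csig i).rules := (Csig i).orth ▸ hq
    exact hq' p hp
  have hcpne : cp.Nonempty := p.nonempty_of_mem_parts hcp
  have hcqne : cq.Nonempty := q.nonempty_of_mem_parts hcq
  have hvmono : Monotone (Fin.val : Fin (Csig i).arity → ℕ) := fun _ _ h => h
  -- the base relation of the DR graph
  set R : S.pre.Node → S.pre.Node → Prop := fun a b =>
    (∃ l, S.pre.kind l = .ax ∧ S.pre.concl l = [a, b]) ∨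
    (∃ l, S.pre.kind l = .cut ∧ S.pre.prem l = [a, b]) ∨
    (∃ l, ∃ c ∈ sw.part l, ∃ j ∈ c, ∃ k ∈ c, j < k ∧ (∀ x ∈ c, ¬ (j < x ∧ x < k)) ∧
      (S.pre.prem l)[j]? = some a ∧ (S.pre.prem l)[k]? = some b) ∨
    (∃ l j, (∃ h : (sw.selClass l).Nonempty, j = (sw.selClass l).min' h) ∧
      (S.pre.prem l)[j]? = some a ∧ b ∈ S.pre.concl l) with hR
  have hgetC : ∀ (j : ℕ) (u : S.pre.Node),
      ((S.pre.prem (eL.symm (Sum.inr true)))[j]? = some u) ↔ ∃ hj : j < (Csig i).arity, u = pn ⟨j, hj⟩ := by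
    intro j u
    rw [hpc, List.getElem?_ofFn]
    split
    · simp only [Option.some.injEq]
      constructor
      · intro h; exact ⟨by assumption, h.symm⟩
      · rintro ⟨hj, rfl⟩; rfl
    · simp only [reduceCtorEq, false_iff]
      rintro ⟨hj, rfl⟩
      omega
  have hgetD : ∀ (j : ℕ) (u : S.pre.Node),
      ((S.pre.prem (eL.symm (Sum.inr false)))[j]? = some u) ↔ ∃ hj : j < (Csig i).arity, u = nn ⟨j, hj⟩ := by
    intro j u
    rw [hpd, List.getElem?_ofFn]
    split
    · simp only [Option.some.injEq]
      constructor
      · intro h; exact ⟨by assumption, h.symm⟩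
      · rintro ⟨hj, rfl⟩; rfl
    · simp only [reduceCtorEq, false_iff]
      rintro ⟨hj, rfl⟩
      omega
  have hrel : ∀ u v, R u v ↔ cRel p q cp cq (eN u) (eN v) := by
    intro u v
    constructor
    · intro h
      rcases h with ⟨l, hk, hcl⟩ | ⟨l, hk, hpr⟩ | ⟨l, c, hc, j, hj, k, hk0, hjk, hbet, hju, hkv⟩ |
        ⟨l, j, ⟨hne, hjmin⟩, hju, hv⟩
      · -- axiom links
        obtain ⟨x, rfl⟩ : ∃ x, l = eL.symm x := ⟨eL l, (eL.symm_apply_apply l).symm⟩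
        rcases x with k | b
        · obtain ⟨-, -, hc2⟩ := hax k
          rw [hc2] at hcl
          simp only [List.cons.injEq, and_true] at hcl
          obtain ⟨h1, h2⟩ := hcl
          refine Or.inl ⟨k, ?_, ?_⟩
          · rw [← h1]; exact (Equiv.apply_symm_apply _ _).symm ▸ by simp [hpn]
          · rw [← h2]; simp [hnn]
        · cases b
          · rw [hkd] at hk; simp at hk
          · rw [hkc] at hk; simp at hk
      · -- no cut links
        obtain ⟨x, rfl⟩ : ∃ x, l = eL.symm x := ⟨eL l, (eL.symm_apply_apply l).symm⟩
        rcases x with k | b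
        · rw [(hax k).1] at hk; simp at hk
        · cases b
          · rw [hkd] at hk; simp at hk
          · rw [hkc] at hk; simp at hk
      · -- consecutive premises
        obtain ⟨x, rfl⟩ : ∃ x, l = eL.symm x := ⟨eL l, (eL.symm_apply_apply l).symm⟩
        rcases x with k0 | b
        · rw [(sw.valid_other _ (Or.inl (hax k0).1)).1] at hc
          simp at hc
        · cases b
          · -- dconn link : q side
            rw [hqart] at hc
            obtain ⟨c', hc', rfl⟩ := Finset.mem_image.1 hc
            obtain ⟨j', hj', rfl⟩ := Finset.mem_image.1 hj
            obtain ⟨k', hk', rfl⟩ := Finset.mem_image.1 hk0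
            obtain ⟨hjlt, rfl⟩ := (hgetD _ _).1 hju
            obtain ⟨hklt, rfl⟩ := (hgetD _ _).1 hkv
            refine Or.inr (Or.inr (Or.inl ⟨c', hc', j', k', ⟨hj', hk', hjk, ?_⟩, ?_, ?_⟩))
            · intro x hx hxx
              exact hbet x.val (Finset.mem_image_of_mem _ hx) ⟨hxx.1, hxx.2⟩
            · simp [hnn]
            · simp [hnn]
          · -- conn link : p side
            rw [hpart] at hc
            obtain ⟨c', hc', rfl⟩ := Finset.mem_image.1 hc
            obtain ⟨j', hj', rfl⟩ := Finset.mem_image.1 hj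
            obtain ⟨k', hk', rfl⟩ := Finset.mem_image.1 hk0
            obtain ⟨hjlt, rfl⟩ := (hgetC _ _).1 hju
            obtain ⟨hklt, rfl⟩ := (hgetC _ _).1 hkv
            refine Or.inr (Or.inl ⟨c', hc', j', k', ⟨hj', hk', hjk, ?_⟩, ?_, ?_⟩)
            · intro x hx hxx
              exact hbet x.val (Finset.mem_image_of_mem _ hx) ⟨hxx.1, hxx.2⟩
            · simp [hpn]
            · simp [hpn]
      · -- the selected-class edge to the conclusion
        obtain ⟨x, rfl⟩ : ∃ x, l = eL.symm x := ⟨eL l, (eL.symm_apply_apply l).symm⟩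
        rcases x with k0 | b
        · rw [(sw.valid_other _ (Or.inl (hax k0).1)).2] at hne
          exact absurd hne Finset.not_nonempty_empty
        · cases b
          · -- dconn
            rw [min'_congr hcqeq hne, Finset.min'_image hvmono] at hjmin
            subst hjmin
            obtain ⟨hjlt, rfl⟩ := (hgetD _ _).1 hju
            rw [hcd] at hv
            simp only [List.mem_singleton] at hv
            subst hv
            refine Or.inr (Or.inr (Or.inr (Or.inr ⟨hcqne, ?_, ?_⟩)))
            · simp [hnn]
            · simp
          · -- conn
            rw [min'_congr hcpeq hne, Finset.min'_image hvmono] at hjmin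
            subst hjmin
            obtain ⟨hjlt, rfl⟩ := (hgetC _ _).1 hju
            rw [hcc] at hv
            simp only [List.mem_singleton] at hv
            subst hv
            refine Or.inr (Or.inr (Or.inr (Or.inl ⟨hcpne, ?_, ?_⟩)))
            · simp [hpn]
            · simp
    · intro h
      rcases h with ⟨k, hu, hv⟩ | ⟨c, hc, j, k, ⟨hjc, hkc2, hjk, hbet⟩, hu, hv⟩ |
        ⟨c, hc, j, k, ⟨hjc, hkc2, hjk, hbet⟩, hu, hv⟩ | ⟨h1, hu, hv⟩ | ⟨h1, hu, hv⟩
      · -- axiom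
        have hu' : u = pn k := by rw [← Equiv.symm_apply_apply eN u, hu]
        have hv' : v = nn k := by rw [← Equiv.symm_apply_apply eN v, hv]
        refine Or.inl ⟨eL.symm (.inl k), (hax k).1, ?_⟩
        rw [(hax k).2.2, hu', hv']
      · -- p consecutive
        have hu' : u = pn j := by rw [← Equiv.symm_apply_apply eN u, hu]
        have hv' : v = pn k := by rw [← Equiv.symm_apply_apply eN v, hv]
        refine Or.inr (Or.inr (Or.inl ⟨eL.symm (Sum.inr true), c.image Fin.val, ?_, j.val, ?_, k.val, ?_,
          hjk, ?_, ?_, ?_⟩))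
        · rw [hpart]; exact Finset.mem_image_of_mem _ hc
        · exact Finset.mem_image_of_mem _ hjc
        · exact Finset.mem_image_of_mem _ hkc2
        · rintro x hx ⟨h1, h2⟩
          obtain ⟨x', hx', rfl⟩ := Finset.mem_image.1 hx
          exact hbet x' hx' ⟨h1, h2⟩
        · rw [hgetC]; exact ⟨j.isLt, by rw [hu']⟩
        · rw [hgetC]; exact ⟨k.isLt, by rw [hv']⟩
      · -- q consecutive
        have hu' : u = nn j := by rw [← Equiv.symm_apply_apply eN u, hu]
        have hv' : v = nn k := by rw [← Equiv.symm_apply_apply eN v, hv]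
        refine Or.inr (Or.inr (Or.inl ⟨eL.symm (Sum.inr false), c.image Fin.val, ?_, j.val, ?_, k.val, ?_,
          hjk, ?_, ?_, ?_⟩))
        · rw [hqart]; exact Finset.mem_image_of_mem _ hc
        · exact Finset.mem_image_of_mem _ hjc
        · exact Finset.mem_image_of_mem _ hkc2
        · rintro x hx ⟨h1, h2⟩
          obtain ⟨x', hx', rfl⟩ := Finset.mem_image.1 hx
          exact hbet x' hx' ⟨h1, h2⟩
        · rw [hgetD]; exact ⟨j.isLt, by rw [hu']⟩
        · rw [hgetD]; exact ⟨k.isLt, by rw [hv']⟩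
      · -- conn conclusion edge
        have hu' : u = pn (cp.min' h1) := by rw [← Equiv.symm_apply_apply eN u, hu]
        have hv' : v = eN.symm (.inr true) := by rw [← Equiv.symm_apply_apply eN v, hv]
        refine Or.inr (Or.inr (Or.inr ⟨eL.symm (Sum.inr true), (cp.min' h1).val, ⟨?_, ?_⟩, ?_, ?_⟩))
        · rw [← hcpeq]; exact hcpne.image _
        · rw [min'_congr hcpeq, Finset.min'_image hvmono]
        · rw [hgetC]; exact ⟨(cp.min' h1).isLt, by rw [hu']⟩
        · rw [hcc, hv']; simp
      · -- dconn conclusion edge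
        have hu' : u = nn (cq.min' h1) := by rw [← Equiv.symm_apply_apply eN u, hu]
        have hv' : v = eN.symm (.inr false) := by rw [← Equiv.symm_apply_apply eN v, hv]
        refine Or.inr (Or.inr (Or.inr ⟨eL.symm (Sum.inr false), (cq.min' h1).val, ⟨?_, ?_⟩, ?_, ?_⟩))
        · rw [← hcqeq]; exact hcqne.image _
        · rw [min'_congr hcqeq, Finset.min'_image hvmono]
        · rw [hgetD]; exact ⟨(cq.min' h1).isLt, by rw [hu']⟩
        · rw [hcd, hv']; simp
  have hadj : ∀ u v, (S.pre.drGraph sw).Adj u v ↔ (cGraph p q cp cq).Adj (eN u) (eN v) := by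
    intro u v
    rw [PrePS.drGraph, SimpleGraph.fromRel_adj, cGraph, SimpleGraph.fromRel_adj]
    constructor
    · rintro ⟨hne, h | h⟩
      · exact ⟨fun hc => hne (eN.injective hc), Or.inl ((hrel u v).1 h)⟩
      · exact ⟨fun hc => hne (eN.injective hc), Or.inr ((hrel v u).1 h)⟩
    · rintro ⟨hne, h | h⟩
      · exact ⟨fun hc => hne (congrArg eN hc), Or.inl ((hrel u v).2 h)⟩
      · exact ⟨fun hc => hne (congrArg eN hc), Or.inr ((hrel v u).2 h)⟩
  have φ : S.pre.drGraph sw ≃g cGraph p q cp cq :=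
    { toEquiv := eN, map_rel_iff' := fun {u v} => (hadj u v).symm }
  obtain ⟨hconn, hacyc⟩ := cGraph_isTree hcp hcq horth
  constructor
  · exact hconn.map φ.symm.toHom (Equiv.surjective φ.symm.toEquiv)
  · intro v c hc
    exact hacyc (c.map φ.toHom) (hc.map (Equiv.injective φ.toEquiv))

/-! ### Non-sequentializability of the expansion structure -/

lemma toPre_node_nonempty {I : Type} {Csig : I → GenConn} :
    ∀ {Γ : List (Formula I Csig)} (d : Deriv Csig Γ), Nonempty (toPre d).S.Node := by
  intro Γ d
  induction d with
  | ax m => exact ⟨(0 : Fin 2)⟩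
  | exch e he d ih => exact ih
  | cut A d₁ d₂ ih₁ ih₂ =>
    obtain ⟨x⟩ := ih₁
    exact ⟨Sum.inl x⟩
  | tens A B d₁ d₂ ih₁ ih₂ => exact ⟨Sum.inr ()⟩
  | parr A B d ih => exact ⟨Sum.inr ()⟩
  | conn A p hp cls hcls hinj Γs prems ih => exact ⟨Sum.inr ()⟩
  | dconn A p hp cls hcls hinj Γs prems ih => exact ⟨Sum.inr ()⟩

lemma sigma_sum_fst {α : Type*} {β : α → Type*} {γ : Type*} {a b : α} {x : β a} {y : β b}
    (h : (Sum.inl ⟨a, x⟩ : (Σ j, β j) ⊕ γ) = Sum.inl ⟨b, y⟩) : a = b := by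
  injection h with h'
  exact congrArg Sigma.fst h'

lemma expansion_not_seq {I : Type} {Csig : I → GenConn} (i : I)
    (hnt : ¬ IsTensorSet (Csig i).rules) (hnp : ¬ IsParSet (Csig i).rules)
    (a : Fin (Csig i).arity → ℕ) (S : ProofStructure I Csig)
    (hS : IsExpansionPS i a S.pre) : ¬ Sequentializable S := by
  obtain ⟨eN, eL, hlp, hln, hlct, hlcf, hax, hkc, hpc, hcc, hkd, hpd, hcd⟩ := hS
  set pn : Fin (Csig i).arity → S.pre.Node := fun k => eN.symm (.inl (.inl k)) with hpn
  set nn : Fin (Csig i).arity → S.pre.Node := fun k => eN.symm (.inl (.inr k)) with hnn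
  have hSkind : ∀ l : S.pre.Link,
      S.pre.kind l = .ax ∨ S.pre.kind l = .conn i ∨ S.pre.kind l = .dconn i := by
    intro l
    obtain ⟨x, rfl⟩ : ∃ x, l = eL.symm x := ⟨eL l, (eL.symm_apply_apply l).symm⟩
    rcases x with k | b
    · exact Or.inl (hax k).1
    · cases b
      · exact Or.inr (Or.inr hkd)
      · exact Or.inr (Or.inl hkc)
  have hconnlink : ∀ l, S.pre.kind l = .conn i → l = eL.symm (Sum.inr true) := by
    intro l hl
    obtain ⟨x, rfl⟩ : ∃ x, l = eL.symm x := ⟨eL l, (eL.symm_apply_apply l).symm⟩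
    rcases x with k | b
    · rw [(hax k).1] at hl; simp at hl
    · cases b
      · rw [hkd] at hl; simp at hl
      · rfl
  have hdconnlink : ∀ l, S.pre.kind l = .dconn i → l = eL.symm (Sum.inr false) := by
    intro l hl
    obtain ⟨x, rfl⟩ : ∃ x, l = eL.symm x := ⟨eL l, (eL.symm_apply_apply l).symm⟩
    rcases x with k | b
    · rw [(hax k).1] at hl; simp at hl
    · cases b
      · rfl
      · rw [hkc] at hl; simp at hl
  rintro ⟨Γ, d, hne⟩
  revert hne
  induction d with
  | ax m =>
    rintro ⟨φ⟩
    have h0 := φ.kind_eq (eL.symm (Sum.inr true))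
    rw [hkc] at h0
    simp [toPre] at h0
  | exch e he d ih =>
    intro hne
    apply ih
    obtain ⟨φ⟩ := hne
    exact ⟨φ⟩
  | cut A d₁ d₂ ih₁ ih₂ =>
    rintro ⟨φ⟩
    have h0 := φ.kind_eq (φ.linkEquiv.symm (Sum.inr ()))
    erw [Equiv.apply_symm_apply] at h0
    rcases hSkind (φ.linkEquiv.symm (Sum.inr ())) with h | h | h <;>
      rw [h] at h0 <;> simp [toPre] at h0
  | tens A B d₁ d₂ ih₁ ih₂ =>
    rintro ⟨φ⟩
    have h0 := φ.kind_eq (φ.linkEquiv.symm (Sum.inr ()))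
    erw [Equiv.apply_symm_apply] at h0
    rcases hSkind (φ.linkEquiv.symm (Sum.inr ())) with h | h | h <;>
      rw [h] at h0 <;> simp [toPre] at h0
  | parr A B d ih =>
    rintro ⟨φ⟩
    have h0 := φ.kind_eq (φ.linkEquiv.symm (Sum.inr ()))
    erw [Equiv.apply_symm_apply] at h0
    rcases hSkind (φ.linkEquiv.symm (Sum.inr ())) with h | h | h <;>
      rw [h] at h0 <;> simp [toPre] at h0
  | @conn i' A p hp k cls hcls hinj Γs prems ih =>
    rintro ⟨φ⟩
    have h0 := φ.kind_eq (φ.linkEquiv.symm (Sum.inr ()))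
    erw [Equiv.apply_symm_apply] at h0
    have hT : (toPre (Deriv.conn A p hp cls hcls hinj Γs prems)).S.kind (Sum.inr ()) =
        .conn i' := rfl
    rw [hT] at h0
    rcases hSkind (φ.linkEquiv.symm (Sum.inr ())) with h | h | h
    · rw [h] at h0; simp at h0
    · rw [h] at h0
      injection h0 with hii
      subst hii
      have hl0 : φ.linkEquiv.symm (Sum.inr ()) = eL.symm (Sum.inr true) := hconnlink _ h
      -- reduction equations
      have hredp : ∀ (j : Fin k) (l : (toPre (prems j)).S.Link),
          (toPre (Deriv.conn A p hp cls hcls hinj Γs prems)).S.prem (Sum.inl ⟨j, l⟩) =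
          ((toPre (prems j)).S.prem l).map (fun w => Sum.inl ⟨j, w⟩) := fun _ _ => rfl
      have hredc : ∀ (j : Fin k) (l : (toPre (prems j)).S.Link),
          (toPre (Deriv.conn A p hp cls hcls hinj Γs prems)).S.concl (Sum.inl ⟨j, l⟩) =
          ((toPre (prems j)).S.concl l).map (fun w => Sum.inl ⟨j, w⟩) := fun _ _ => rfl
      have hredcu : (toPre (Deriv.conn A p hp cls hcls hinj Γs prems)).S.concl (Sum.inr ()) =
          [Sum.inr ()] := rfl
      have hredk : ∀ u : Unit,
          (toPre (Deriv.conn A p hp cls hcls hinj Γs prems)).S.kind (Sum.inr u) =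
          .conn i' := fun _ => rfl
      -- the dconn link of S lands in some component j0
      have h1 := φ.kind_eq (eL.symm (Sum.inr false))
      rw [hkd] at h1
      rcases hx : φ.linkEquiv (eL.symm (Sum.inr false)) with y | u
      swap
      · rw [hx, hredk u] at h1; simp at h1
      obtain ⟨j0, ldc⟩ := y
      -- all negative atoms land in component j0
      have hprem := φ.prem_eq (eL.symm (Sum.inr false))
      rw [hx, hpd, hredp j0 ldc] at hprem
      have hneg : ∀ t, ∃ w, φ.nodeEquiv (nn t) = Sum.inl ⟨j0, w⟩ := by
        intro t
        have hm : φ.nodeEquiv (nn t) ∈ (List.ofFn nn).map φ.nodeEquiv :=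
          List.mem_map_of_mem (by rw [List.mem_ofFn]; exact ⟨t, rfl⟩)
        rw [← hprem] at hm
        obtain ⟨w, -, hw⟩ := List.mem_map.1 hm
        exact ⟨w, hw.symm⟩
      -- all positive atoms land in component j0
      have hpos : ∀ t, ∃ w, φ.nodeEquiv (pn t) = Sum.inl ⟨j0, w⟩ := by
        intro t
        have h2 := φ.kind_eq (eL.symm (Sum.inl t))
        rw [(hax t).1] at h2
        rcases hxt : φ.linkEquiv (eL.symm (Sum.inl t)) with y | u
        swap
        · rw [hxt, hredk u] at h2; simp at h2
        obtain ⟨jt, lax⟩ := y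
        have hc2 := φ.concl_eq (eL.symm (Sum.inl t))
        rw [hxt, (hax t).2.2, hredc jt lax, List.map_cons, List.map_cons, List.map_nil] at hc2
        have hmem2 : φ.nodeEquiv (nn t) ∈
            ((toPre (prems jt)).S.concl lax).map
              (fun w => (Sum.inl ⟨jt, w⟩ :
                (Σ j, (toPre (prems j)).S.Node) ⊕ Unit)) := by
          rw [hc2]; exact List.mem_cons_of_mem _ List.mem_cons_self
        obtain ⟨w, -, hw⟩ := List.mem_map.1 hmem2
        obtain ⟨w', hw'⟩ := hneg t
        have hjt : jt = j0 := sigma_sum_fst (hw.trans hw')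
        have hmem3 : φ.nodeEquiv (pn t) ∈
            ((toPre (prems jt)).S.concl lax).map
              (fun w => (Sum.inl ⟨jt, w⟩ :
                (Σ j, (toPre (prems j)).S.Node) ⊕ Unit)) := by
          rw [hc2]; exact List.mem_cons_self
        obtain ⟨w'', -, hw''⟩ := List.mem_map.1 hmem3
        subst hjt
        exact ⟨w'', hw''.symm⟩
      -- the conclusion of the conn link is the inr node
      have hct : φ.nodeEquiv (eN.symm (Sum.inr true)) = Sum.inr () := by
        have hc0 := φ.concl_eq (φ.linkEquiv.symm (Sum.inr ()))
        erw [Equiv.apply_symm_apply] at hc0; rw [hl0, hcc, hredcu, List.map_cons, List.map_nil] at hc0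
        exact (List.cons.inj hc0.symm).1
      -- the conclusion of the dconn link lands in component j0
      have hcf : ∃ w, φ.nodeEquiv (eN.symm (Sum.inr false)) = Sum.inl ⟨j0, w⟩ := by
        have hc0 := φ.concl_eq (eL.symm (Sum.inr false))
        rw [hx, hcd, hredc j0 ldc, List.map_cons, List.map_nil] at hc0
        have hmem2 : φ.nodeEquiv (eN.symm (Sum.inr false)) ∈
            ((toPre (prems j0)).S.concl ldc).map
              (fun w => (Sum.inl ⟨j0, w⟩ :
                (Σ j, (toPre (prems j)).S.Node) ⊕ Unit)) := by
          rw [hc0]; exact List.mem_cons_self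
        obtain ⟨w, -, hw⟩ := List.mem_map.1 hmem2
        exact ⟨w, hw.symm⟩
      -- every component is j0
      have hallj : ∀ j : Fin k, j = j0 := by
        intro j
        obtain ⟨nd⟩ := toPre_node_nonempty (prems j)
        set node : (Σ j, (toPre (prems j)).S.Node) ⊕ Unit := Sum.inl ⟨j, nd⟩ with hnode
        have hsur : φ.nodeEquiv (φ.nodeEquiv.symm node) = node := Equiv.apply_symm_apply _ _
        obtain ⟨z, hz⟩ : ∃ z, φ.nodeEquiv.symm node = eN.symm z :=
          ⟨eN (φ.nodeEquiv.symm node), (eN.symm_apply_apply _).symm⟩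
        rw [hz] at hsur
        rcases z with (t | t) | b
        · obtain ⟨w, hw⟩ := hpos t
          rw [show eN.symm (Sum.inl (Sum.inl t)) = pn t from rfl, hw] at hsur
          rw [hnode] at hsur
          exact (sigma_sum_fst hsur).symm
        · obtain ⟨w, hw⟩ := hneg t
          rw [show eN.symm (Sum.inl (Sum.inr t)) = nn t from rfl, hw] at hsur
          rw [hnode] at hsur
          exact (sigma_sum_fst hsur).symm
        · cases b
          · obtain ⟨w, hw⟩ := hcf
            rw [hw, hnode] at hsur
            exact (sigma_sum_fst hsur).symm
          · rw [hct, hnode] at hsur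
            simp at hsur
      -- hence p has a single class, which must be univ
      have hparts : p.parts = {cls j0} := by
        refine Finset.eq_singleton_iff_unique_mem.2 ⟨(hcls _).2 ⟨j0, rfl⟩, fun c hc => ?_⟩
        obtain ⟨j, rfl⟩ := (hcls c).1 hc
        rw [hallj j]
      have huniv : cls j0 = Finset.univ := by
        have := p.sup_parts
        rw [hparts] at this
        simpa using this
      have hmemparts : (Finset.univ : Finset (Fin (Csig i').arity)) ∈ p.parts := by
        rw [hparts, ← huniv]
        exact Finset.mem_singleton_self _
      exact absurd (isParSet_of_univ_mem (Csig i') hp (parts_eq_singleton_univ hmemparts)) hnp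
    · rw [h] at h0; simp at h0
  | @dconn i' A p hp k cls hcls hinj Γs prems ih =>
    rintro ⟨φ⟩
    have h0 := φ.kind_eq (φ.linkEquiv.symm (Sum.inr ()))
    erw [Equiv.apply_symm_apply] at h0
    have hT : (toPre (Deriv.dconn A p hp cls hcls hinj Γs prems)).S.kind (Sum.inr ()) =
        .dconn i' := rfl
    rw [hT] at h0
    rcases hSkind (φ.linkEquiv.symm (Sum.inr ())) with h | h | h
    · rw [h] at h0; simp at h0
    · rw [h] at h0; simp at h0
    · rw [h] at h0
      injection h0 with hii
      subst hii
      have hl0 : φ.linkEquiv.symm (Sum.inr ()) = eL.symm (Sum.inr false) := hdconnlink _ h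
      have hredp : ∀ (j : Fin k) (l : (toPre (prems j)).S.Link),
          (toPre (Deriv.dconn A p hp cls hcls hinj Γs prems)).S.prem (Sum.inl ⟨j, l⟩) =
          ((toPre (prems j)).S.prem l).map (fun w => Sum.inl ⟨j, w⟩) := fun _ _ => rfl
      have hredc : ∀ (j : Fin k) (l : (toPre (prems j)).S.Link),
          (toPre (Deriv.dconn A p hp cls hcls hinj Γs prems)).S.concl (Sum.inl ⟨j, l⟩) =
          ((toPre (prems j)).S.concl l).map (fun w => Sum.inl ⟨j, w⟩) := fun _ _ => rfl
      have hredcu : (toPre (Deriv.dconn A p hp cls hcls hinj Γs prems)).S.concl (Sum.inr ()) =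
          [Sum.inr ()] := rfl
      have hredk : ∀ u : Unit,
          (toPre (Deriv.dconn A p hp cls hcls hinj Γs prems)).S.kind (Sum.inr u) =
          .dconn i' := fun _ => rfl
      -- the conn link of S lands in some component j0
      have h1 := φ.kind_eq (eL.symm (Sum.inr true))
      rw [hkc] at h1
      rcases hx : φ.linkEquiv (eL.symm (Sum.inr true)) with y | u
      swap
      · rw [hx, hredk u] at h1; simp at h1
      obtain ⟨j0, lcc⟩ := y
      have hprem := φ.prem_eq (eL.symm (Sum.inr true))
      rw [hx, hpc, hredp j0 lcc] at hprem
      have hposn : ∀ t, ∃ w, φ.nodeEquiv (pn t) = Sum.inl ⟨j0, w⟩ := by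
        intro t
        have hm : φ.nodeEquiv (pn t) ∈ (List.ofFn pn).map φ.nodeEquiv :=
          List.mem_map_of_mem (by rw [List.mem_ofFn]; exact ⟨t, rfl⟩)
        rw [← hprem] at hm
        obtain ⟨w, -, hw⟩ := List.mem_map.1 hm
        exact ⟨w, hw.symm⟩
      have hnegn : ∀ t, ∃ w, φ.nodeEquiv (nn t) = Sum.inl ⟨j0, w⟩ := by
        intro t
        have h2 := φ.kind_eq (eL.symm (Sum.inl t))
        rw [(hax t).1] at h2
        rcases hxt : φ.linkEquiv (eL.symm (Sum.inl t)) with y | u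
        swap
        · rw [hxt, hredk u] at h2; simp at h2
        obtain ⟨jt, lax⟩ := y
        have hc2 := φ.concl_eq (eL.symm (Sum.inl t))
        rw [hxt, (hax t).2.2, hredc jt lax, List.map_cons, List.map_cons, List.map_nil] at hc2
        have hmem2 : φ.nodeEquiv (pn t) ∈
            ((toPre (prems jt)).S.concl lax).map
              (fun w => (Sum.inl ⟨jt, w⟩ :
                (Σ j, (toPre (prems j)).S.Node) ⊕ Unit)) := by
          rw [hc2]; exact List.mem_cons_self
        obtain ⟨w, -, hw⟩ := List.mem_map.1 hmem2
        obtain ⟨w', hw'⟩ := hposn t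
        have hjt : jt = j0 := sigma_sum_fst (hw.trans hw')
        have hmem3 : φ.nodeEquiv (nn t) ∈
            ((toPre (prems jt)).S.concl lax).map
              (fun w => (Sum.inl ⟨jt, w⟩ :
                (Σ j, (toPre (prems j)).S.Node) ⊕ Unit)) := by
          rw [hc2]; exact List.mem_cons_of_mem _ List.mem_cons_self
        obtain ⟨w'', -, hw''⟩ := List.mem_map.1 hmem3
        subst hjt
        exact ⟨w'', hw''.symm⟩
      have hcf : φ.nodeEquiv (eN.symm (Sum.inr false)) = Sum.inr () := by
        have hc0 := φ.concl_eq (φ.linkEquiv.symm (Sum.inr ()))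
        erw [Equiv.apply_symm_apply] at hc0; rw [hl0, hcd, hredcu, List.map_cons, List.map_nil] at hc0
        exact (List.cons.inj hc0.symm).1
      have hct : ∃ w, φ.nodeEquiv (eN.symm (Sum.inr true)) = Sum.inl ⟨j0, w⟩ := by
        have hc0 := φ.concl_eq (eL.symm (Sum.inr true))
        rw [hx, hcc, hredc j0 lcc, List.map_cons, List.map_nil] at hc0
        have hmem2 : φ.nodeEquiv (eN.symm (Sum.inr true)) ∈
            ((toPre (prems j0)).S.concl lcc).map
              (fun w => (Sum.inl ⟨j0, w⟩ :
                (Σ j, (toPre (prems j)).S.Node) ⊕ Unit)) := by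
          rw [hc0]; exact List.mem_cons_self
        obtain ⟨w, -, hw⟩ := List.mem_map.1 hmem2
        exact ⟨w, hw.symm⟩
      have hallj : ∀ j : Fin k, j = j0 := by
        intro j
        obtain ⟨nd⟩ := toPre_node_nonempty (prems j)
        set node : (Σ j, (toPre (prems j)).S.Node) ⊕ Unit := Sum.inl ⟨j, nd⟩ with hnode
        have hsur : φ.nodeEquiv (φ.nodeEquiv.symm node) = node := Equiv.apply_symm_apply _ _
        obtain ⟨z, hz⟩ : ∃ z, φ.nodeEquiv.symm node = eN.symm z :=
          ⟨eN (φ.nodeEquiv.symm node), (eN.symm_apply_apply _).symm⟩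
        rw [hz] at hsur
        rcases z with (t | t) | b
        · obtain ⟨w, hw⟩ := hposn t
          rw [show eN.symm (Sum.inl (Sum.inl t)) = pn t from rfl, hw] at hsur
          rw [hnode] at hsur
          exact (sigma_sum_fst hsur).symm
        · obtain ⟨w, hw⟩ := hnegn t
          rw [show eN.symm (Sum.inl (Sum.inr t)) = nn t from rfl, hw] at hsur
          rw [hnode] at hsur
          exact (sigma_sum_fst hsur).symm
        · cases b
          · rw [hcf, hnode] at hsur
            simp at hsur
          · obtain ⟨w, hw⟩ := hct
            rw [hw, hnode] at hsur
            exact (sigma_sum_fst hsur).symm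
      have hparts : p.parts = {cls j0} := by
        refine Finset.eq_singleton_iff_unique_mem.2 ⟨(hcls _).2 ⟨j0, rfl⟩, fun c hc => ?_⟩
        obtain ⟨j, rfl⟩ := (hcls c).1 hc
        rw [hallj j]
      have huniv : cls j0 = Finset.univ := by
        have := p.sup_parts
        rw [hparts] at this
        simpa using this
      have hmemparts : (Finset.univ : Finset (Fin (Csig i').arity)) ∈ p.parts := by
        rw [hparts, ← huniv]
        exact Finset.mem_singleton_self _
      exact absurd (isTensorSet_of_univ_mem_dual (Csig i') hp
        (parts_eq_singleton_univ hmemparts)) hnt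
/-- **Failure of sequentialization for the Danos–Regnier switching:** for any dual pair
`(C, C*)` of `n`-ary generalized connectives with `C ≠ ⊗ⁿ` and `C ≠ ⅋ⁿ` (i.e. `P_C` is
neither the partition set of all singletons nor the one-class partition set), the
proof-structure `S` with exactly two terminal nodes `C(A₁,…,Aₙ)` and `C*(~A₁,…,~Aₙ)`
(the `A_k` distinct atoms, joined by atomic axiom links) is correct in the sense of the
Danos–Regnier switching but is not sequentializable; hence there exists a
Danos–Regnier-correct proof-structure that is not sequentializable. -/
theorem DR_correct_not_sequentializable {I : Type} {Csig : I → GenConn} (i : I)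
    (hnt : ¬ IsTensorSet (Csig i).rules) (hnp : ¬ IsParSet (Csig i).rules)
    (a : Fin (Csig i).arity → ℕ) (ha : Function.Injective a)
    (S : ProofStructure I Csig) (hS : IsExpansionPS i a S.pre) :
    (S.pre.DRProofNet ∧ ¬ Sequentializable S) ∧
    ∃ T : ProofStructure I Csig, T.pre.DRProofNet ∧ ¬ Sequentializable T := by
  have hdr := expansion_DRProofNet i a S hS
  have hns := expansion_not_seq i hnt hnp a S hS
  exact ⟨⟨hdr, hns⟩, S, hdr, hns⟩
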